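/- Let p be an odd prime such that there exists u ∈ ℤ/pℤ with u² = 3 (i.e. 3 is a quadratic residue mod p or p = 3). For integers u₀, v₀ with u₀ ≡ u (mod p) and v₀ ≡ 1 (mod p), the rational sequences α_i, β_i defined over ℚ by the Theorem B2 recurrences with parameters (u₀, v₀) satisfy: whenever all β₁,…,β_n are nonzero (so the recursion is defined up to index n), each β_i for i ≥ 1 is a p-adic unit, and hence β_i ≠ 0. -/

import Mathlib

open PadicInt

namespace Stmt16Aux

/-- the residue pattern sequence: `cfn m ∈ {0,1}` -/
def cfn : ℕ → ℕ
  | 0 => 1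
  | (m+1) =>
    if (m+1) % 3 = 0 then 1
    else if (m+1) % 3 = 2 then 0
    else 1 - cfn ((m+1)/3)
decreasing_by exact Nat.div_lt_self (Nat.succ_pos m) (by norm_num)

theorem cfn_le_one (m : ℕ) : cfn m ≤ 1 := by
  cases m with
  | zero => simp [cfn]
  | succ m => rw [cfn]; split_ifs <;> omega

theorem cfn_zero : cfn 0 = 1 := by simp [cfn]

theorem cfn_mod0 {m : ℕ} (h : m % 3 = 0) : cfn m = 1 := by
  cases m with
  | zero => exact cfn_zero
  | succ m => rw [cfn, if_pos h]

theorem cfn_mod2 {m : ℕ} (h : m % 3 = 2) : cfn m = 0 := by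
  cases m with
  | zero => simp at h
  | succ m => rw [cfn, if_neg (by omega), if_pos h]

theorem cfn_mod1 {m : ℕ} (h : m % 3 = 1) : cfn m = 1 - cfn (m/3) := by
  cases m with
  | zero => simp at h
  | succ m => rw [cfn, if_neg (by omega), if_neg (by omega)]

variable {p : ℕ} [Fact p.Prime]

/-- `q : ℚ` is a `p`-adic integer with residue `r` mod `p`. -/
def Res (p : ℕ) [Fact p.Prime] (q : ℚ) (r : ZMod p) : Prop :=
  ∃ x : ℤ_[p], ((x : ℚ_[p]) = (q : ℚ_[p])) ∧ PadicInt.toZMod x = r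

theorem Res.intCast (m : ℤ) : Res p (m : ℚ) ((m : ZMod p)) :=
  ⟨(m : ℤ_[p]), by push_cast [PadicInt.coe_intCast]; ring, map_intCast _ m⟩

theorem Res.congr {q : ℚ} {r r' : ZMod p} (h : Res p q r) (hr : r = r') : Res p q r' := hr ▸ h

theorem Res.congrq {q q' : ℚ} {r : ZMod p} (h : Res p q r) (hq : q = q') : Res p q' r := hq ▸ h

theorem Res.add {q₁ q₂ : ℚ} {r₁ r₂ : ZMod p} (h₁ : Res p q₁ r₁) (h₂ : Res p q₂ r₂) :
    Res p (q₁ + q₂) (r₁ + r₂) := by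
  obtain ⟨x, hx, hx'⟩ := h₁; obtain ⟨y, hy, hy'⟩ := h₂
  exact ⟨x + y, by push_cast [hx, hy]; ring, by rw [map_add, hx', hy']⟩

theorem Res.mul {q₁ q₂ : ℚ} {r₁ r₂ : ZMod p} (h₁ : Res p q₁ r₁) (h₂ : Res p q₂ r₂) :
    Res p (q₁ * q₂) (r₁ * r₂) := by
  obtain ⟨x, hx, hx'⟩ := h₁; obtain ⟨y, hy, hy'⟩ := h₂
  exact ⟨x * y, by push_cast [hx, hy]; ring, by rw [map_mul, hx', hy']⟩

theorem Res.neg {q : ℚ} {r : ZMod p} (h : Res p q r) : Res p (-q) (-r) := by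
  obtain ⟨x, hx, hx'⟩ := h
  exact ⟨-x, by push_cast [hx]; ring, by rw [map_neg, hx']⟩

theorem Res.sub {q₁ q₂ : ℚ} {r₁ r₂ : ZMod p} (h₁ : Res p q₁ r₁) (h₂ : Res p q₂ r₂) :
    Res p (q₁ - q₂) (r₁ - r₂) := by
  have := h₁.add h₂.neg
  rw [← sub_eq_add_neg, ← sub_eq_add_neg] at this
  exact this

theorem Res.pow {q : ℚ} {r : ZMod p} (h : Res p q r) (k : ℕ) : Res p (q ^ k) (r ^ k) := by
  obtain ⟨x, hx, hx'⟩ := h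
  exact ⟨x ^ k, by push_cast [hx]; ring, by rw [map_pow, hx']⟩

theorem isUnit_of_toZMod (x : ℤ_[p]) (h : PadicInt.toZMod x ≠ 0) : IsUnit x := by
  by_contra hc
  apply h
  rw [← RingHom.mem_ker, PadicInt.ker_toZMod, IsLocalRing.mem_maximalIdeal]
  exact mem_nonunits_iff.mpr hc

theorem Res.div {q₁ q₂ : ℚ} {r₁ r₂ : ZMod p} (h₁ : Res p q₁ r₁) (h₂ : Res p q₂ r₂)
    (hr₂ : r₂ ≠ 0) : Res p (q₁ / q₂) (r₁ / r₂) := by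
  obtain ⟨x, hx, hx'⟩ := h₁
  obtain ⟨y, hy, hy'⟩ := h₂
  obtain ⟨w, rfl⟩ := isUnit_of_toZMod y (by rw [hy']; exact hr₂)
  have hinv : ((w : ℤ_[p]) : ℚ_[p]) * (((w⁻¹ : ℤ_[p]ˣ) : ℤ_[p]) : ℚ_[p]) = 1 := by
    rw [← PadicInt.coe_mul, ← Units.val_mul, mul_inv_cancel]
    simp
  refine ⟨x * ((w⁻¹ : ℤ_[p]ˣ) : ℤ_[p]), ?_, ?_⟩
  · rw [PadicInt.coe_mul, hx]
    have hw : (((w⁻¹ : ℤ_[p]ˣ) : ℤ_[p]) : ℚ_[p]) = ((w : ℤ_[p]) : ℚ_[p])⁻¹ :=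
      eq_inv_of_mul_eq_one_left (by rw [mul_comm]; exact hinv)
    rw [hy] at hw
    rw [hw]
    push_cast
    rw [div_eq_mul_inv]
  · rw [map_mul, hx']
    have h1 : r₂ * PadicInt.toZMod ((w⁻¹ : ℤ_[p]ˣ) : ℤ_[p]) = 1 := by
      rw [← hy', ← map_mul, ← Units.val_mul, mul_inv_cancel, Units.val_one, map_one]
    have h3 : PadicInt.toZMod ((w⁻¹ : ℤ_[p]ˣ) : ℤ_[p]) = r₂⁻¹ :=
      eq_inv_of_mul_eq_one_left (by rw [mul_comm]; exact h1)
    rw [h3, div_eq_mul_inv]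

theorem Res.padicValRat_eq_zero {q : ℚ} {r : ZMod p} (h : Res p q r) (hr : r ≠ 0) :
    padicValRat p q = 0 := by
  obtain ⟨x, hx, hx'⟩ := h
  have hxu : IsUnit x := isUnit_of_toZMod x (by rw [hx']; exact hr)
  have hnorm : ‖(q : ℚ_[p])‖ = 1 := by
    rw [← hx, ← PadicInt.norm_def]
    exact PadicInt.isUnit_iff.mp hxu
  have hq : q ≠ 0 := by
    intro h0
    rw [h0] at hnorm
    simp at hnorm
  rw [Padic.eq_padicNorm, padicNorm.eq_zpow_of_nonzero hq] at hnorm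
  have hp1 : (1 : ℚ) < p := by exact_mod_cast (Fact.out : p.Prime).one_lt
  have hinj := zpow_right_injective₀ (by positivity : (0:ℚ) < (p:ℚ)) (by linarith : (p:ℚ) ≠ 1)
  have hQ : ((p:ℚ)) ^ (-padicValRat p q) = 1 := by exact_mod_cast hnorm
  have h0 : -padicValRat p q = (0:ℤ) := hinj (by simpa using hQ)
  omega

end Stmt16Aux

open Stmt16Aux in
theorem stmt16 (p : ℕ) [Fact p.Prime] (hodd : p ≠ 2)
    (u : ZMod p) (hu : u^2 = 3)
    (u₀ v₀ : ℤ) (hu₀ : (u₀ : ZMod p) = u) (hv₀ : (v₀ : ZMod p) = 1)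
    (n : ℕ) (α β : ℕ → ℚ)
    (hα1 : 1 ≤ n → α 1 = -u₀)
    (hα2 : 2 ≤ n → α 2 = u₀ * (2*v₀ - 1 - u₀^2) / (v₀ - u₀^2))
    (hα3 : 3 ≤ n → α 3 = -u₀ * (v₀ - 1) / (v₀ - u₀^2))
    (hβ1 : 1 ≤ n → β 1 = 1)
    (hβ2 : 2 ≤ n → β 2 = u₀^2 - v₀)
    (hβ3 : 3 ≤ n → β 3 = (u₀^2 + u₀^4 + v₀^3 - 3*u₀^2*v₀) / (v₀ - u₀^2)^2)
    (hrα4 : ∀ k : ℕ, 3*k+4 ≤ n → α (3*k+4) = -u₀)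
    (hrβ4 : ∀ k : ℕ, 3*k+4 ≤ n → β (3*k+4) = β (k+2) / (β (3*k+3) * β (3*k+2)))
    (hrβ5 : ∀ k : ℕ, 3*k+5 ≤ n → β (3*k+5) = u₀^2 - v₀ - β (3*k+4))
    (hrα5 : ∀ k : ℕ, 3*k+5 ≤ n →
      α (3*k+5) = u₀ - (α (k+2) + u₀*v₀ - α (3*k+2) * β (3*k+4)) / β (3*k+5))
    (hrα6 : ∀ k : ℕ, 3*k+6 ≤ n → α (3*k+6) = u₀ - α (3*k+5))
    (hrβ6 : ∀ k : ℕ, 3*k+6 ≤ n → β (3*k+6) = v₀ - α (3*k+5) * α (3*k+6))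
    (hne : ∀ i : ℕ, 1 ≤ i → i ≤ n → β i ≠ 0) :
    ∀ i : ℕ, 1 ≤ i → i ≤ n → padicValRat p (β i) = 0 := by
  have hp := (Fact.out : p.Prime)
  have h2 : (2 : ZMod p) ≠ 0 := by
    intro h
    have h2' : ((2:ℕ) : ZMod p) = 0 := by exact_mod_cast h
    have hd : p ∣ 2 := (ZMod.natCast_eq_zero_iff 2 p).mp h2'
    have hle2 := Nat.le_of_dvd (by norm_num) hd
    have hge2 := hp.two_le
    omega
  -- residue sequences
  set A : ℕ → ZMod p := fun i =>
    if i % 3 = 1 then -u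
    else if i % 3 = 2 then u * (cfn (i/3) : ZMod p)
    else u * (1 - (cfn (i/3 - 1) : ZMod p)) with hA
  set B : ℕ → ZMod p := fun i => if i = 2 then 2 else 1 with hB
  have hA1 : ∀ j : ℕ, A (3*j+1) = -u := by
    intro j
    have h : (3*j+1) % 3 = 1 := by omega
    simp only [hA, h, if_pos]
  have hA2 : ∀ j : ℕ, A (3*j+2) = u * (cfn j : ZMod p) := by
    intro j
    have h : (3*j+2) % 3 = 2 := by omega
    have h' : (3*j+2) / 3 = j := by omega
    simp only [hA, h, h']
    norm_num
  have hA0 : ∀ j : ℕ, A (3*j+3) = u * (1 - (cfn j : ZMod p)) := by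
    intro j
    have h : (3*j+3) % 3 = 0 := by omega
    have h' : (3*j+3) / 3 - 1 = j := by omega
    simp only [hA, h, h']
    norm_num
  have hB1 : ∀ j : ℕ, j ≠ 2 → B j = 1 := by
    intro j hj; simp only [hB, if_neg hj]
  have hB2 : B 2 = 2 := by simp [hB]
  have hBne : ∀ j : ℕ, B j ≠ 0 := by
    intro j
    simp only [hB]
    split_ifs
    · exact h2
    · exact one_ne_zero
  have hResu : Res p (u₀ : ℚ) u := (Res.intCast u₀).congr hu₀
  have hResv : Res p (v₀ : ℚ) 1 := (Res.intCast v₀).congr hv₀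
  have hRes1 : Res p (1 : ℚ) (1 : ZMod p) := by
    have h := Res.intCast (p := p) 1
    norm_num at h
    exact h
  have hRes2 : Res p (2 : ℚ) (2 : ZMod p) := by
    have h := Res.intCast (p := p) 2
    norm_num at h
    exact h
  have hRes3 : Res p (3 : ℚ) (3 : ZMod p) := by
    have h := Res.intCast (p := p) 3
    norm_num at h
    exact h
  have key : ∀ i : ℕ, 1 ≤ i → i ≤ n → Res p (α i) (A i) ∧ Res p (β i) (B i) := by
    intro i
    induction i using Nat.strong_induction_on with
    | _ i ih =>
      intro h1 hin
      rcases Nat.lt_or_ge i 4 with h4 | h4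
      · interval_cases i
        · -- i = 1
          constructor
          · rw [hα1 hin]
            refine hResu.neg.congr ?_
            rw [show (1:ℕ) = 3*0+1 from rfl, hA1]
          · rw [hβ1 hin]
            exact hRes1.congr (by rw [hB1 1 (by norm_num)])
        · -- i = 2
          constructor
          · rw [hα2 hin]
            refine (((hRes2.mul hResv).sub hRes1).sub (hResu.pow 2) |>.mul hResu |>.congrq
              (by ring) |>.div (hResv.sub (hResu.pow 2)) ?_).congr ?_
            · rw [hu]; intro h; apply h2; linear_combination -h
            · rw [show (2:ℕ) = 3*0+2 from rfl, hA2, cfn_zero, hu]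
              have hne1 : (1 - (3:ZMod p)) ≠ 0 := by intro h; apply h2; linear_combination -h
              field_simp
              ring
          · rw [hβ2 hin]
            refine ((hResu.pow 2).sub hResv).congr ?_
            rw [hu, hB2]
            ring
        · -- i = 3
          constructor
          · rw [hα3 hin]
            refine ((hResu.neg.mul (hResv.sub hRes1)).div (hResv.sub (hResu.pow 2)) ?_).congr ?_
            · rw [hu]; intro h; apply h2; linear_combination -h
            · rw [show (3:ℕ) = 3*0+3 from rfl, hA0, cfn_zero]
              norm_num
          · rw [hβ3 hin]
            have hd4 : ((1:ZMod p) - 3)^2 ≠ 0 := by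
              have he : ((1:ZMod p) - 3)^2 = 2*2 := by ring
              rw [he]
              intro h
              rcases mul_eq_zero.mp h with h' | h' <;> exact h2 h'
            refine ((((hResu.pow 2).add (hResu.pow 4)).add (hResv.pow 3) |>.sub
              ((hRes3.mul (hResu.pow 2)).mul hResv) |>.div
              ((hResv.sub (hResu.pow 2)).pow 2) ?_)).congr ?_
            · rw [hu]; exact hd4
            · rw [hB1 3 (by norm_num)]
              have hu4 : u^4 = 9 := by
                have he : u^4 = (u^2)^2 := by ring
                rw [he, hu]; norm_num
              rw [hu, hu4]
              field_simp
              ring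
              exact inv_mul_cancel₀ (by rw [show (4:ZMod p) = 2*2 by norm_num]; exact mul_ne_zero h2 h2)
      · obtain ⟨k, hk | hk | hk⟩ : ∃ k, i = 3*k+4 ∨ i = 3*k+5 ∨ i = 3*k+6 :=
          ⟨(i-4)/3, by omega⟩
        · -- i = 3k+4
          subst hk
          have hle : 3*k+4 ≤ n := hin
          have hβ4 : Res p (β (3*k+4)) (B (3*k+4)) := by
            rw [hrβ4 k hle]
            have hk2 := (ih (k+2) (by omega) (by omega) (by omega)).2
            have hk3 := (ih (3*k+3) (by omega) (by omega) (by omega)).2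
            have hk2' := (ih (3*k+2) (by omega) (by omega) (by omega)).2
            refine (hk2.div (hk3.mul hk2') (mul_ne_zero (hBne _) (hBne _))).congr ?_
            rw [hB1 (3*k+3) (by omega), hB1 (3*k+4) (by omega), one_mul]
            rcases Nat.eq_zero_or_pos k with rfl | hkpos
            · norm_num
              exact hBne 2
            · rw [hB1 (k+2) (by omega), hB1 (3*k+2) (by omega)]
              norm_num
          refine ⟨?_, hβ4⟩
          rw [hrα4 k hle]
          refine hResu.neg.congr ?_
          rw [show 3*k+4 = 3*(k+1)+1 by ring, hA1]
        · -- i = 3k+5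
          subst hk
          have hle : 3*k+5 ≤ n := hin
          have hβ4 := (ih (3*k+4) (by omega) (by omega) (by omega)).2
          have hβ5 : Res p (β (3*k+5)) (B (3*k+5)) := by
            rw [hrβ5 k hle]
            refine (((hResu.pow 2).sub hResv).sub hβ4).congr ?_
            rw [hu, hB1 (3*k+4) (by omega), hB1 (3*k+5) (by omega)]
            ring
          refine ⟨?_, hβ5⟩
          rw [hrα5 k hle]
          have hαk2 := (ih (k+2) (by omega) (by omega) (by omega)).1
          have hα32 := (ih (3*k+2) (by omega) (by omega) (by omega)).1
          refine (hResu.sub (((hαk2.add (hResu.mul hResv)).sub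
            (hα32.mul hβ4)).div hβ5 (hBne _))).congr ?_
          rw [hB1 (3*k+4) (by omega), hB1 (3*k+5) (by omega), hA2 k,
            show 3*k+5 = 3*(k+1)+2 by ring, hA2 (k+1)]
          obtain ⟨j, hj | hj | hj⟩ : ∃ j, k = 3*j ∨ k = 3*j+1 ∨ k = 3*j+2 :=
            ⟨k/3, by omega⟩
          · subst hj
            rw [show 3*j+2 = 3*j+2 from rfl, hA2 j]
            have hc0 : cfn (3*j) = 1 := cfn_mod0 (by omega)
            have hcast : ((cfn (3*j+1) : ℕ) : ZMod p) = 1 - (cfn j : ZMod p) := by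
              have hdiv : (3*j+1)/3 = j := by omega
              have hc1 : cfn (3*j+1) = 1 - cfn j := by
                rw [cfn_mod1 (by omega), hdiv]
              rw [hc1, Nat.cast_sub (cfn_le_one j)]
              norm_num
            rw [hc0, hcast]
            push_cast
            field_simp
            ring
          · subst hj
            rw [show 3*j+1+2 = 3*j+3 from rfl, hA0 j]
            have hc2 : cfn (3*j+1+1) = 0 := cfn_mod2 (by omega)
            have hcast : ((cfn (3*j+1) : ℕ) : ZMod p) = 1 - (cfn j : ZMod p) := by
              have hdiv : (3*j+1)/3 = j := by omega
              have hc1 : cfn (3*j+1) = 1 - cfn j := by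
                rw [cfn_mod1 (by omega), hdiv]
              rw [hc1, Nat.cast_sub (cfn_le_one j)]
              norm_num
            rw [hc2, hcast]
            push_cast
            field_simp
            ring
          · subst hj
            rw [show 3*j+2+2 = 3*(j+1)+1 by ring, hA1 (j+1)]
            have hc2 : cfn (3*j+2) = 0 := cfn_mod2 (by omega)
            have hc0 : cfn (3*j+2+1) = 1 := cfn_mod0 (by omega)
            rw [hc2, hc0]
            push_cast
            field_simp
            ring
        · -- i = 3k+6
          subst hk
          have hle : 3*k+6 ≤ n := hin
          have hα5 := (ih (3*k+5) (by omega) (by omega) (by omega)).1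
          have hα6 : Res p (α (3*k+6)) (A (3*k+6)) := by
            rw [hrα6 k hle]
            refine (hResu.sub hα5).congr ?_
            rw [show 3*k+5 = 3*(k+1)+2 by ring, hA2 (k+1),
              show 3*k+6 = 3*(k+1)+3 by ring, hA0 (k+1)]
            ring
          refine ⟨hα6, ?_⟩
          rw [hrβ6 k hle]
          refine (hResv.sub (hα5.mul hα6)).congr ?_
          rw [hB1 (3*k+6) (by omega), show 3*k+5 = 3*(k+1)+2 by ring, hA2 (k+1),
            show 3*k+6 = 3*(k+1)+3 by ring, hA0 (k+1)]
          rcases Nat.le_one_iff_eq_zero_or_eq_one.mp (cfn_le_one (k+1)) with hc | hc <;>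
            rw [hc] <;> push_cast <;> ring
  intro i h1 hin
  exact (key i h1 hin).2.padicValRat_eq_zero (hBne i)
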